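/- Let r ≥ 4 and 1 ≤ k ≤ ⌊r/2⌋ be integers. Let z ∈ SO_{2r}(ℂ) (i.e. zᵀz = I and det z = 1) be such that z commutes with every block-diagonal matrix diag(h₁, h₂) where h₁ ∈ SO_{2k+1}(ℂ) and h₂ ∈ SO_{2r−2k−1}(ℂ). Then z = I or z = −I. -/

import Mathlib

open Matrix

lemma exists_third {m : ℕ} (hm : 3 ≤ m) (i j : Fin m) : ∃ l : Fin m, l ≠ i ∧ l ≠ j := by
  by_contra h
  push_neg at h
  have hsub : (Finset.univ : Finset (Fin m)) ⊆ {i, j} := by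
    intro t _
    by_cases ht : t = i
    · simp [ht]
    · simp [h t ht]
  have h1 := Finset.card_le_card hsub
  have h2 : ({i, j} : Finset (Fin m)).card ≤ 2 :=
    (Finset.card_insert_le _ _).trans (by simp)
  simp [Finset.card_univ] at h1
  omega

lemma two_prod_eq_one {m : ℕ} {i l : Fin m} (hil : i ≠ l) :
    (∏ t, (if t = i ∨ t = l then (-1 : ℂ) else 1)) = 1 := by
  have h : ∀ t : Fin m, (if t = i ∨ t = l then (-1 : ℂ) else 1) =
      (if t = i then -1 else 1) * (if t = l then -1 else 1) := by
    intro t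
    by_cases h1 : t = i <;> by_cases h2 : t = l <;> simp_all
  simp only [h, Finset.prod_mul_distrib, Finset.prod_ite_eq', Finset.mem_univ, if_true]
  ring

lemma sign_orth {m : ℕ} (ε : Fin m → ℂ) (hε : ∀ t, ε t * ε t = 1) :
    (diagonal ε)ᵀ * diagonal ε = 1 := by
  rw [diagonal_transpose, diagonal_mul_diagonal]
  convert diagonal_one using 2
  ext t; exact hε t

lemma epsTwo_so {m : ℕ} (i l : Fin m) (hil : i ≠ l) :
    (diagonal (fun t => if t = i ∨ t = l then (-1 : ℂ) else 1))ᵀ *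
      diagonal (fun t => if t = i ∨ t = l then (-1 : ℂ) else 1) = 1 ∧
    (diagonal (fun t => if t = i ∨ t = l then (-1 : ℂ) else 1)).det = 1 := by
  constructor
  · apply sign_orth
    intro t; by_cases h : t = i ∨ t = l <;> simp [h]
  · rw [det_diagonal]; exact two_prod_eq_one hil

lemma gadget_orth {m : ℕ} (σ : Equiv.Perm (Fin m)) (ε : Fin m → ℂ)
    (hε : ∀ t, ε t * ε t = 1) :
    (diagonal ε * σ.permMatrix ℂ)ᵀ * (diagonal ε * σ.permMatrix ℂ) = 1 := by
  have hP : (σ.permMatrix ℂ)ᵀ = (σ⁻¹).permMatrix ℂ := by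
    rw [Equiv.Perm.permMatrix, ← PEquiv.toMatrix_symm, ← Equiv.toPEquiv_symm]
    rfl
  have hDD : diagonal ε * diagonal ε = (1 : Matrix (Fin m) (Fin m) ℂ) := by
    rw [diagonal_mul_diagonal]
    convert diagonal_one using 2
    ext t; exact hε t
  rw [transpose_mul, diagonal_transpose, hP, mul_assoc,
    ← mul_assoc (diagonal ε), hDD, one_mul,
    Equiv.Perm.permMatrix, PEquiv.toMatrix_toPEquiv_mul]
  ext i j
  simp [one_apply, Equiv.toPEquiv_apply, PEquiv.toMatrix_apply, Equiv.eq_symm_apply]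

lemma gadget_det {m : ℕ} (σ : Equiv.Perm (Fin m)) (ε : Fin m → ℂ) :
    (diagonal ε * σ.permMatrix ℂ).det = (∏ t, ε t) * (Equiv.Perm.sign σ : ℂ) := by
  rw [det_mul, det_diagonal, Matrix.det_permutation]

lemma scalar_of_comm {m : ℕ} (hm : 3 ≤ m) (A : Matrix (Fin m) (Fin m) ℂ)
    (h : ∀ g : Matrix (Fin m) (Fin m) ℂ, gᵀ * g = 1 → g.det = 1 → A * g = g * A) :
    ∃ a : ℂ, A = a • 1 := by
  have hoff : ∀ i j : Fin m, i ≠ j → A i j = 0 := by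
    intro i j hij
    obtain ⟨l, hli, hlj⟩ := exists_third hm i j
    obtain ⟨ho, hd⟩ := epsTwo_so i l (Ne.symm hli)
    have hc := h _ ho hd
    have he := congrArg (fun M => M i j) hc
    simp only [mul_diagonal, diagonal_mul] at he
    have hj : ¬(j = i ∨ j = l) := by
      rintro (h1 | h1)
      · exact hij h1.symm
      · exact hlj h1.symm
    rw [if_neg hj] at he
    norm_num at he
    have h2 : (2 : ℂ) * A i j = 0 := by linear_combination he
    simpa using h2
  have hdiag : ∀ i j : Fin m, A i i = A j j := by
    intro i j
    by_cases hij : i = j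
    · rw [hij]
    · set σ := Equiv.swap i j with hσ
      set ε := fun t : Fin m => if t = i then (-1 : ℂ) else 1 with hε
      have hε2 : ∀ t, ε t * ε t = 1 := by
        intro t; by_cases h1 : t = i <;> simp [hε, h1]
      have hd : (diagonal ε * σ.permMatrix ℂ).det = 1 := by
        rw [gadget_det]
        have h1 : (∏ t, ε t) = -1 := by
          simp [hε, Finset.prod_ite_eq']
        rw [h1, hσ, Equiv.Perm.sign_swap hij]
        norm_num
      have hc := h _ (gadget_orth σ ε hε2) hd
      rw [← mul_assoc, mul_assoc (diagonal ε), Equiv.Perm.permMatrix,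
        PEquiv.mul_toMatrix_toPEquiv, PEquiv.toMatrix_toPEquiv_mul] at hc
      have he := congrArg (fun M => M i j) hc
      simp only [submatrix_apply, id_eq, diagonal_mul, mul_diagonal] at he
      simp only [hσ, Equiv.symm_swap, Equiv.swap_apply_right, Equiv.swap_apply_left, hε,
        if_pos rfl] at he
      linear_combination -he
  have h0 : 0 < m := by omega
  refine ⟨A ⟨0, h0⟩ ⟨0, h0⟩, ?_⟩
  ext u v
  by_cases huv : u = v
  · subst huv
    simp [hdiag u ⟨0, h0⟩]
  · simp [hoff u v huv, Matrix.one_apply_ne huv, huv]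

lemma rows_zero {m n : ℕ} (hm : 3 ≤ m) (B : Matrix (Fin m) (Fin n) ℂ)
    (h : ∀ g : Matrix (Fin m) (Fin m) ℂ, gᵀ * g = 1 → g.det = 1 → g * B = B) : B = 0 := by
  ext i v
  obtain ⟨l, hli, -⟩ := exists_third hm i i
  obtain ⟨ho, hd⟩ := epsTwo_so i l (Ne.symm hli)
  have hc := h _ ho hd
  have he := congrArg (fun M => M i v) hc
  simp only [diagonal_mul, if_pos (Or.inl rfl)] at he
  norm_num at he
  have h2 : (2 : ℂ) * B i v = 0 := by linear_combination -he
  simpa using h2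

lemma cols_zero {m n : ℕ} (hm : 3 ≤ m) (C : Matrix (Fin n) (Fin m) ℂ)
    (h : ∀ g : Matrix (Fin m) (Fin m) ℂ, gᵀ * g = 1 → g.det = 1 → C * g = C) : C = 0 := by
  ext u j
  obtain ⟨l, hlj, -⟩ := exists_third hm j j
  obtain ⟨ho, hd⟩ := epsTwo_so j l (Ne.symm hlj)
  have hc := h _ ho hd
  have he := congrArg (fun M => M u j) hc
  simp only [mul_diagonal, if_pos (Or.inl rfl)] at he
  norm_num at he
  have h2 : (2 : ℂ) * C u j = 0 := by linear_combination -he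
  simpa using h2


/-- If `z ∈ SO_{2r}(ℂ)` commutes with every block-diagonal matrix `diag(h₁, h₂)` with
`h₁ ∈ SO_{2k+1}(ℂ)` and `h₂ ∈ SO_{2r−2k−1}(ℂ)` (where `r ≥ 4` and `1 ≤ k ≤ ⌊r/2⌋`, and the
`2r` indices are split as `(2k+1) + (2r−2k−1)`), then `z = I` or `z = −I`. -/
theorem centralizer_blockDiag_SO (r k : ℕ) (hr : 4 ≤ r) (hk1 : 1 ≤ k) (hk2 : k ≤ r / 2)
    (z : Matrix (Fin (2 * k + 1) ⊕ Fin (2 * r - 2 * k - 1))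
        (Fin (2 * k + 1) ⊕ Fin (2 * r - 2 * k - 1)) ℂ)
    (hzo : zᵀ * z = 1) (hzd : z.det = 1)
    (hcomm : ∀ (h₁ : Matrix (Fin (2 * k + 1)) (Fin (2 * k + 1)) ℂ)
        (h₂ : Matrix (Fin (2 * r - 2 * k - 1)) (Fin (2 * r - 2 * k - 1)) ℂ),
        h₁ᵀ * h₁ = 1 → h₁.det = 1 → h₂ᵀ * h₂ = 1 → h₂.det = 1 →
        z * Matrix.fromBlocks h₁ 0 0 h₂ = Matrix.fromBlocks h₁ 0 0 h₂ * z) :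
    z = 1 ∨ z = -1 := by
  have hm : 3 ≤ 2 * k + 1 := by omega
  have hn : 3 ≤ 2 * r - 2 * k - 1 := by omega
  set A := z.toBlocks₁₁ with hA'
  set B := z.toBlocks₁₂ with hB'
  set C := z.toBlocks₂₁ with hC'
  set D := z.toBlocks₂₂ with hD'
  have hz : z = fromBlocks A B C D := (fromBlocks_toBlocks z).symm
  have hone : ∀ p : ℕ, ((1 : Matrix (Fin p) (Fin p) ℂ)ᵀ * 1 = 1) ∧
      (1 : Matrix (Fin p) (Fin p) ℂ).det = 1 := by
    intro p; simp
  have key : ∀ (g₁ : Matrix (Fin (2 * k + 1)) (Fin (2 * k + 1)) ℂ)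
      (g₂ : Matrix (Fin (2 * r - 2 * k - 1)) (Fin (2 * r - 2 * k - 1)) ℂ),
      g₁ᵀ * g₁ = 1 → g₁.det = 1 → g₂ᵀ * g₂ = 1 → g₂.det = 1 →
      A * g₁ = g₁ * A ∧ B * g₂ = g₁ * B ∧ C * g₁ = g₂ * C ∧ D * g₂ = g₂ * D := by
    intro g₁ g₂ h1 h2 h3 h4
    have hc := hcomm g₁ g₂ h1 h2 h3 h4
    rw [hz, fromBlocks_multiply, fromBlocks_multiply] at hc
    simp only [Matrix.mul_zero, Matrix.zero_mul, add_zero, zero_add] at hc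
    exact ⟨congrArg toBlocks₁₁ hc, congrArg toBlocks₁₂ hc,
      congrArg toBlocks₂₁ hc, congrArg toBlocks₂₂ hc⟩
  obtain ⟨a, hA⟩ := scalar_of_comm hm A (fun g hgo hgd =>
    (key g 1 hgo hgd (hone _).1 (hone _).2).1)
  obtain ⟨d, hD⟩ := scalar_of_comm hn D (fun g hgo hgd =>
    (key 1 g (hone _).1 (hone _).2 hgo hgd).2.2.2)
  have hB : B = 0 := rows_zero hm B (fun g hgo hgd => by
    have := (key g 1 hgo hgd (hone _).1 (hone _).2).2.1
    rw [Matrix.mul_one] at this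
    exact this.symm)
  have hC : C = 0 := cols_zero hm C (fun g hgo hgd => by
    have := (key g 1 hgo hgd (hone _).1 (hone _).2).2.2.1
    rwa [Matrix.one_mul] at this)
  rw [hA, hB, hC, hD] at hz
  rw [hz] at hzo hzd
  rw [fromBlocks_transpose, fromBlocks_multiply] at hzo
  simp only [transpose_zero, transpose_smul, transpose_one, Matrix.mul_zero, Matrix.zero_mul,
    add_zero, zero_add, smul_mul_smul_comm, Matrix.mul_one, Matrix.one_mul] at hzo
  rw [← fromBlocks_one] at hzo
  have ha2 : a * a = 1 := by
    have h11 := congrArg toBlocks₁₁ hzo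
    have := congrArg (fun M => M ⟨0, by omega⟩ ⟨0, by omega⟩) h11
    simpa [toBlocks₁₁, toBlocks₂₂, Matrix.one_apply] using this
  have hd2 : d * d = 1 := by
    have h22 := congrArg toBlocks₂₂ hzo
    have := congrArg (fun M => M ⟨0, by omega⟩ ⟨0, by omega⟩) h22
    simpa [toBlocks₁₁, toBlocks₂₂, Matrix.one_apply] using this
  rw [det_fromBlocks_zero₂₁, det_smul, det_smul, det_one, det_one] at hzd
  have hmodd : a ^ (2 * k + 1) = a := by
    rw [pow_succ, pow_mul]
    rw [show a ^ 2 = 1 by rw [pow_two]; exact ha2]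
    simp
  have hnodd : d ^ (2 * r - 2 * k - 1) = d := by
    obtain ⟨j, hj⟩ : ∃ j, 2 * r - 2 * k - 1 = 2 * j + 1 := ⟨r - k - 1, by omega⟩
    rw [hj, pow_succ, pow_mul]
    rw [show d ^ 2 = 1 by rw [pow_two]; exact hd2]
    simp
  rw [Fintype.card_fin, Fintype.card_fin, hmodd, hnodd, mul_one, mul_one] at hzd
  rcases mul_self_eq_one_iff.mp ha2 with ha | ha
  · left
    have hd1 : d = 1 := by rw [ha, one_mul] at hzd; exact hzd
    rw [hz, ha, hd1, one_smul, one_smul, fromBlocks_one]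
  · right
    have hd1 : d = -1 := by
      rw [ha] at hzd
      linear_combination -hzd
    rw [hz, ha, hd1]
    rw [show ((0 : Matrix (Fin (2 * k + 1)) (Fin (2 * r - 2 * k - 1)) ℂ)) = -0 by simp,
      show ((0 : Matrix (Fin (2 * r - 2 * k - 1)) (Fin (2 * k + 1)) ℂ)) = -0 by simp,
      neg_one_smul, neg_one_smul, ← fromBlocks_neg, fromBlocks_one]
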